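/- Let H be a complex Hilbert space and (X, ν) a measure space. Let ψ : X → H be an upper semi-frame with upper frame bound M, i.e. ψ is total, x ↦ ⟨ψ_x, f⟩ is ν-measurable for all f, and 0 < ∫_X |⟨ψ_x, f⟩|² dν(x) ≤ M‖f‖² for all f ≠ 0. Let φ : X → H be a total family with ν-measurable coefficient functions that is dual to ψ in the weak sense: for all f, g ∈ H the function x ↦ ⟨g, ψ_x⟩⟨φ_x, f⟩ is ν-integrable and ∫_X ⟨g, ψ_x⟩⟨φ_x, f⟩ dν(x) = ⟨g, f⟩. Then φ is a lower semi-frame with lower frame bound M⁻¹: for all f ∈ H, M⁻¹‖f‖² ≤ ∫_X |⟨φ_x, f⟩|² dν(x) (as a value in [0, ∞]). -/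

import Mathlib

open MeasureTheory Filter
open scoped ComplexInnerProductSpace ENNReal

/-- If `ψ` is an upper semi-frame with upper frame bound `M` and `φ` is a
total family dual to `ψ` (in the weak sense), then `φ` is a lower semi-frame with lower
frame bound `M⁻¹`. -/
theorem dual_of_upper_semiframe_is_lower_semiframe
    {H : Type*} [NormedAddCommGroup H] [InnerProductSpace ℂ H] [CompleteSpace H]
    {X : Type*} [MeasurableSpace X] (ν : Measure X)
    (ψ φ : X → H) (M : ℝ) (hM : 0 < M)
    (hψmeas : ∀ f : H, AEMeasurable (fun x => ⟪ψ x, f⟫) ν)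
    (hψtotal : (Submodule.span ℂ (Set.range ψ)).topologicalClosure = ⊤)
    (hupper : ∀ f : H, f ≠ 0 →
      0 < ∫⁻ x, (‖⟪ψ x, f⟫‖₊ : ℝ≥0∞) ^ 2 ∂ν ∧
      ∫⁻ x, (‖⟪ψ x, f⟫‖₊ : ℝ≥0∞) ^ 2 ∂ν ≤ ENNReal.ofReal (M * ‖f‖ ^ 2))
    (hφmeas : ∀ f : H, AEMeasurable (fun x => ⟪φ x, f⟫) ν)
    (hφtotal : (Submodule.span ℂ (Set.range φ)).topologicalClosure = ⊤)
    (hdual : ∀ f g : H,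
      Integrable (fun x => ⟪g, ψ x⟫ * ⟪φ x, f⟫) ν ∧
      ∫ x, ⟪g, ψ x⟫ * ⟪φ x, f⟫ ∂ν = ⟪g, f⟫) :
    ∀ f : H, ENNReal.ofReal (M⁻¹ * ‖f‖ ^ 2) ≤ ∫⁻ x, (‖⟪φ x, f⟫‖₊ : ℝ≥0∞) ^ 2 ∂ν := by
  intro f
  by_cases hf : f = 0
  · simp [hf]
  -- notation
  set a : ℝ≥0∞ := ∫⁻ x, (‖⟪ψ x, f⟫‖₊ : ℝ≥0∞) ^ 2 ∂ν with ha
  set b : ℝ≥0∞ := ∫⁻ x, (‖⟪φ x, f⟫‖₊ : ℝ≥0∞) ^ 2 ∂ν with hb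
  have hMa : a ≤ ENNReal.ofReal (M * ‖f‖ ^ 2) := (hupper f hf).2
  -- Step 1 : ofReal (‖f‖^2) ≤ a^(1/2) * b^(1/2)
  have hu : AEMeasurable (fun x => (‖⟪ψ x, f⟫‖₊ : ℝ≥0∞)) ν := (hψmeas f).enorm
  have hv : AEMeasurable (fun x => (‖⟪φ x, f⟫‖₊ : ℝ≥0∞)) ν := (hφmeas f).enorm
  have holder := ENNReal.lintegral_mul_le_Lp_mul_Lq ν (Real.holderConjugate_iff_eq_conjExponent (by norm_num) |>.mpr (by norm_num) : (2:ℝ).HolderConjugate 2) hu hv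
  have hrpow2 : ∀ g : X → ℝ≥0∞, ∫⁻ x, g x ^ (2:ℝ) ∂ν = ∫⁻ x, g x ^ 2 ∂ν := by
    intro g
    refine lintegral_congr fun x => ?_
    rw [← ENNReal.rpow_natCast (g x) 2]; norm_num
  rw [hrpow2, hrpow2] at holder
  have step1 : ENNReal.ofReal (‖f‖ ^ 2) ≤ a ^ (1/2 : ℝ) * b ^ (1/2 : ℝ) := by
    have hint := (hdual f f).1
    have heq := (hdual f f).2
    have h1 : ‖f‖ ^ 2 ≤ ∫ x, ‖⟪f, ψ x⟫ * ⟪φ x, f⟫‖ ∂ν := by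
      calc ‖f‖ ^ 2 = ‖(⟪f, f⟫ : ℂ)‖ := by
            rw [inner_self_eq_norm_sq_to_K (𝕜 := ℂ) f]; push_cast; simp [sq_abs]
        _ = ‖∫ x, ⟪f, ψ x⟫ * ⟪φ x, f⟫ ∂ν‖ := by rw [heq]
        _ ≤ ∫ x, ‖⟪f, ψ x⟫ * ⟪φ x, f⟫‖ ∂ν := norm_integral_le_integral_norm _
    have h2 : ENNReal.ofReal (∫ x, ‖⟪f, ψ x⟫ * ⟪φ x, f⟫‖ ∂ν)
        = ∫⁻ x, ((fun x => (‖⟪ψ x, f⟫‖₊ : ℝ≥0∞)) * fun x => (‖⟪φ x, f⟫‖₊ : ℝ≥0∞)) x ∂ν := by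
      rw [MeasureTheory.ofReal_integral_eq_lintegral_ofReal hint.norm
        (Filter.Eventually.of_forall fun x => norm_nonneg _)]
      refine lintegral_congr fun x => ?_
      simp only [Pi.mul_apply, norm_mul]
      rw [ENNReal.ofReal_mul (norm_nonneg _), ofReal_norm, enorm_eq_nnnorm,
        ofReal_norm, enorm_eq_nnnorm, ← inner_conj_symm f (ψ x), RCLike.nnnorm_conj]
    calc ENNReal.ofReal (‖f‖ ^ 2) ≤ ENNReal.ofReal (∫ x, ‖⟪f, ψ x⟫ * ⟪φ x, f⟫‖ ∂ν) :=
          ENNReal.ofReal_le_ofReal h1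
      _ = _ := h2
      _ ≤ a ^ (1/2:ℝ) * b ^ (1/2:ℝ) := holder
  -- Step 2
  have hsq : ENNReal.ofReal (‖f‖ ^ 2) ^ (2:ℝ) ≤ a * b := by
    calc ENNReal.ofReal (‖f‖ ^ 2) ^ (2:ℝ) ≤ (a ^ (1/2:ℝ) * b ^ (1/2:ℝ)) ^ (2:ℝ) :=
          ENNReal.rpow_le_rpow step1 (by norm_num)
      _ = a * b := by
          rw [ENNReal.mul_rpow_of_nonneg _ _ (by norm_num), ← ENNReal.rpow_mul,
            ← ENNReal.rpow_mul]
          norm_num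
  have key : ENNReal.ofReal (M * ‖f‖ ^ 2) * ENNReal.ofReal (M⁻¹ * ‖f‖ ^ 2) ≤
      ENNReal.ofReal (M * ‖f‖ ^ 2) * b := by
    calc ENNReal.ofReal (M * ‖f‖ ^ 2) * ENNReal.ofReal (M⁻¹ * ‖f‖ ^ 2)
        = ENNReal.ofReal (‖f‖ ^ 2) ^ (2:ℝ) := by
          rw [← ENNReal.ofReal_mul (by positivity)]
          rw [show ENNReal.ofReal (‖f‖^2) ^ (2:ℝ) = ENNReal.ofReal (‖f‖^2) ^ (2:ℕ) by
            rw [← ENNReal.rpow_natCast]; norm_num]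
          rw [← ENNReal.ofReal_pow (by positivity)]
          congr 1
          field_simp
      _ ≤ a * b := hsq
      _ ≤ ENNReal.ofReal (M * ‖f‖ ^ 2) * b := mul_le_mul_left hMa b
  have hfn : (0:ℝ) < M * ‖f‖ ^ 2 := by
    have : 0 < ‖f‖ := norm_pos_iff.mpr hf
    positivity
  exact (ENNReal.mul_le_mul_iff_right (by simpa [ENNReal.ofReal_pos] using hfn)
    ENNReal.ofReal_ne_top).mp key
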